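/- Delete-free planning is equivalent to the following graph problem: given a directed bipartite graph G=(X,Y,E) with goal set Y_F ⊆ Y, a subgraph G*=(X*,Y*,E*) satisfying (1) Y_F ⊆ Y*, (2) if x ∈ X* and (y,x) ∈ E then y ∈ Y* and (y,x) ∈ E*, (3) every y ∈ Y* has at least one incoming edge (x,y) ∈ E* with x ∈ X*, and G* acyclic, exists iff the corresponding delete-free planning problem (X actions, Y non-initial fluents, (x,y) edges add-effects, (y,x) edges preconditions, goals Y_F) has a solution; specifically, from any such acyclic subgraph a valid sequential plan can be extracted by topological ordering of X*. -/

import Mathlib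

structure Strips (F A : Type) where
  init : Set F
  goal : Set F
  pre : A → Set F
  add : A → Set F
  del : A → Set F
  cost : A → ℕ

def Strips.step {F A : Type} (Q : Strips F A) (s : Set F) (a : A) : Set F :=
  (s \ Q.del a) ∪ Q.add a

def Strips.run {F A : Type} (Q : Strips F A) (s : Set F) (p : List A) : Set F :=
  p.foldl Q.step s

def Strips.ValidFrom {F A : Type} (Q : Strips F A) : Set F → List A → Prop
  | _, [] => True
  | s, a :: p => Q.pre a ⊆ s ∧ Q.ValidFrom (Q.step s a) p

def Strips.Solves {F A : Type} (Q : Strips F A) (p : List A) : Prop :=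
  Q.ValidFrom Q.init p ∧ Q.goal ⊆ Q.run Q.init p

def Strips.planCost {F A : Type} (Q : Strips F A) (p : List A) : ℕ :=
  (p.map Q.cost).sum

/-- The layered make-progress rule: in the induced state sequence, no state at a
later index is a subset of a state at an earlier index. -/
def Strips.MakesProgress {F A : Type} (Q : Strips F A) (s : Set F) (p : List A) : Prop :=
  ∀ i j : ℕ, i < j → j ≤ p.length → ¬ Q.run s (p.take j) ⊆ Q.run s (p.take i)

/-- The delete-free relaxation: all delete-effects removed. -/
def Strips.relax {F A : Type} (Q : Strips F A) : Strips F A :=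
  { Q with del := fun _ => ∅ }

/-- A directed bipartite graph: \`X\` actions, \`Y\` (non-initial) fluents; edges
\`(x,y)\` are add-effects (\`addE\`), edges \`(y,x)\` are preconditions (\`preE\`),
with weights on \`X\` and a goal set \`Y_F ⊆ Y\`. -/
structure DFGraph (X Y : Type) where
  addE : X → Y → Prop
  preE : Y → X → Prop
  w : X → ℕ
  goalY : Set Y

/-- The delete-free planning problem corresponding to a graph: actions \`X\`, fluents
\`Y\` with empty initial state, preconditions the \`(y,x)\` edges, add-effects the
\`(x,y)\` edges, no delete-effects, goals \`Y_F\`. -/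
def DFGraph.toStrips {X Y : Type} (G : DFGraph X Y) : Strips Y X where
  init := ∅
  goal := G.goalY
  pre := fun x => {y | G.preE y x}
  add := fun x => {y | G.addE x y}
  del := fun _ => ∅
  cost := G.w

/-- One-step edge relation of a subgraph, on the disjoint union of actions and
fluents. -/
def DFGraph.SubStep {X Y : Type} (_ : DFGraph X Y)
    (EaddS : X → Y → Prop) (EpreS : Y → X → Prop) : X ⊕ Y → X ⊕ Y → Prop
  | Sum.inl x, Sum.inr y => EaddS x y
  | Sum.inr y, Sum.inl x => EpreS y x
  | _, _ => False

/-- A subgraph \`G* = (X*, Y*, E*)\` of \`G\` satisfying: (1) the goals lie in \`Y*\`;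
(2) if \`x ∈ X*\` and \`(y,x) ∈ E\` then \`y ∈ Y*\` and \`(y,x) ∈ E*\`; (3) every
\`y ∈ Y*\` has an incoming edge \`(x,y) ∈ E*\` with \`x ∈ X*\`; and \`G*\` acyclic. -/
structure DFGraph.GoodSub {X Y : Type} (G : DFGraph X Y) where
  Xs : Set X
  Ys : Set Y
  EaddS : X → Y → Prop
  EpreS : Y → X → Prop
  addS_sub : ∀ x y, EaddS x y → G.addE x y ∧ x ∈ Xs ∧ y ∈ Ys
  preS_sub : ∀ y x, EpreS y x → G.preE y x ∧ x ∈ Xs ∧ y ∈ Ys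
  goal_sub : G.goalY ⊆ Ys
  pre_closed : ∀ x ∈ Xs, ∀ y, G.preE y x → y ∈ Ys ∧ EpreS y x
  caused : ∀ y ∈ Ys, ∃ x, EaddS x y
  acyclic : ∀ v : X ⊕ Y, ¬ Relation.TransGen (G.SubStep EaddS EpreS) v v


section Helpers

open Classical

variable {X Y : Type}

/-- Step monotonicity. -/
lemma Strips.step_mono {F A : Type} (Q : Strips F A) {s t : Set F} (h : s ⊆ t) (a : A) :
    Q.step s a ⊆ Q.step t a :=
  Set.union_subset_union (Set.diff_subset_diff_left h) subset_rfl

lemma Strips.valid_mono {F A : Type} (Q : Strips F A) :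
    ∀ (p : List A) {s t : Set F}, Q.ValidFrom s p → s ⊆ t → Q.ValidFrom t p
  | [], _, _, _, _ => trivial
  | _ :: p, _, _, ⟨h1, h2⟩, hst =>
    ⟨h1.trans hst, Q.valid_mono p h2 (Q.step_mono hst _)⟩

lemma Strips.run_cons {F A : Type} (Q : Strips F A) (s : Set F) (a : A) (q : List A) :
    Q.run s (a :: q) = Q.run (Q.step s a) q := rfl

lemma Strips.run_append {F A : Type} (Q : Strips F A) (s : Set F) (p q : List A) :
    Q.run s (p ++ q) = Q.run (Q.run s p) q := by
  simp [Strips.run, List.foldl_append]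

lemma Strips.valid_append {F A : Type} (Q : Strips F A) :
    ∀ (p : List A) (q : List A) (s : Set F),
      Q.ValidFrom s p → Q.ValidFrom (Q.run s p) q → Q.ValidFrom s (p ++ q)
  | [], _, _, _, h2 => h2
  | _ :: p, q, s, ⟨h1, h2⟩, h3 => ⟨h1, Q.valid_append p q _ h2 h3⟩

lemma Strips.valid_pre {F A : Type} (Q : Strips F A) :
    ∀ (p : List A) (s : Set F), Q.ValidFrom s p →
      ∀ (i : ℕ) (h : i < p.length), Q.pre (p.get ⟨i, h⟩) ⊆ Q.run s (p.take i)
  | _ :: _, _, ⟨h1, _⟩, 0, _ => h1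
  | _ :: p, s, ⟨_, h2⟩, i + 1, h =>
    Q.valid_pre p (Q.step s _) h2 i (Nat.lt_of_succ_lt_succ h)

variable (G : DFGraph X Y)

lemma DFGraph.df_step (s : Set Y) (a : X) :
    G.toStrips.step s a = s ∪ {y | G.addE a y} := by
  simp [Strips.step, DFGraph.toStrips]

lemma DFGraph.df_mem_run (s : Set Y) (q : List X) (y : Y) :
    y ∈ G.toStrips.run s q ↔ y ∈ s ∨ ∃ a ∈ q, G.addE a y := by
  induction q generalizing s with
  | nil => simp [Strips.run]
  | cons a t ih =>
    rw [G.toStrips.run_cons, ih, G.df_step]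
    simp only [Set.mem_union, Set.mem_setOf_eq, List.mem_cons, or_assoc]
    constructor
    · rintro (h | h | ⟨b, hb, h⟩)
      · exact Or.inl h
      · exact Or.inr ⟨a, Or.inl rfl, h⟩
      · exact Or.inr ⟨b, Or.inr hb, h⟩
    · rintro (h | ⟨b, (rfl | hb), h⟩)
      · exact Or.inl h
      · exact Or.inr (Or.inl h)
      · exact Or.inr (Or.inr ⟨b, hb, h⟩)

lemma DFGraph.df_run_mono {s t : Set Y} (h : s ⊆ t) (q : List X) :
    G.toStrips.run s q ⊆ G.toStrips.run t q := by
  intro y hy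
  rw [G.df_mem_run] at hy ⊢
  rcases hy with hy | hy
  · exact Or.inl (h hy)
  · exact Or.inr hy

lemma DFGraph.df_self_subset_run (s : Set Y) (q : List X) : s ⊆ G.toStrips.run s q := by
  intro y hy
  rw [G.df_mem_run]
  exact Or.inl hy

/-- Combine plans achieving individual fluents into one plan achieving all. -/
lemma DFGraph.combine (T : Finset Y)
    (h : ∀ y ∈ T, ∃ p : List X, G.toStrips.ValidFrom ∅ p ∧ y ∈ G.toStrips.run ∅ p) :
    ∃ p : List X, G.toStrips.ValidFrom ∅ p ∧ ∀ y ∈ T, y ∈ G.toStrips.run ∅ p := by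
  classical
  induction T using Finset.induction_on with
  | empty => exact ⟨[], trivial, by simp⟩
  | @insert a T ha ih =>
    obtain ⟨p₁, hv₁, hm₁⟩ := h a (Finset.mem_insert_self a T)
    obtain ⟨p₂, hv₂, hm₂⟩ := ih (fun y hy => h y (Finset.mem_insert_of_mem hy))
    refine ⟨p₁ ++ p₂, ?_, ?_⟩
    · exact G.toStrips.valid_append p₁ p₂ ∅ hv₁
        (G.toStrips.valid_mono p₂ hv₂ (Set.empty_subset _))
    · intro y hy
      rw [G.toStrips.run_append]
      rcases Finset.mem_insert.1 hy with rfl | hy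
      · exact G.df_self_subset_run _ p₂ hm₁
      · exact G.df_run_mono (Set.empty_subset _) p₂ (hm₂ y hy)

lemma DFGraph.plan_of_goodSub [Fintype X] [Fintype Y] (S : G.GoodSub) :
    ∃ p : List X, G.toStrips.Solves p := by
  classical
  set R := G.SubStep S.EaddS S.EpreS with hR
  have hwf : WellFounded (Relation.TransGen R) := by
    have : IsIrrefl (X ⊕ Y) (Relation.TransGen R) := ⟨S.acyclic⟩
    exact Finite.wellFounded_of_trans_of_irrefl _
  have key : ∀ v : X ⊕ Y, ∀ y : Y, v = Sum.inr y → y ∈ S.Ys →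
      ∃ p : List X, G.toStrips.ValidFrom ∅ p ∧ y ∈ G.toStrips.run ∅ p := by
    intro v
    induction v using hwf.induction with
    | _ v IH =>
      rintro y rfl hy
      obtain ⟨x, hx⟩ := S.caused y hy
      obtain ⟨hadd, hxX, _⟩ := S.addS_sub x y hx
      -- plan for the preconditions of x
      have hpre : ∀ z ∈ (Set.toFinite {z : Y | G.preE z x}).toFinset,
          ∃ p : List X, G.toStrips.ValidFrom ∅ p ∧ z ∈ G.toStrips.run ∅ p := by
        intro z hz
        rw [Set.Finite.mem_toFinset] at hz
        obtain ⟨hzY, hzE⟩ := S.pre_closed x hxX z hz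
        have e1 : R (Sum.inr z) (Sum.inl x) := hzE
        have e2 : R (Sum.inl x) (Sum.inr y) := hx
        have hstep : Relation.TransGen R (Sum.inr z) (Sum.inr y) :=
          Relation.TransGen.head e1 (Relation.TransGen.single e2)
        exact IH (Sum.inr z) hstep z rfl hzY
      obtain ⟨p, hvp, hmp⟩ := G.combine _ hpre
      refine ⟨p ++ [x], ?_, ?_⟩
      · refine G.toStrips.valid_append p [x] ∅ hvp ⟨?_, trivial⟩
        intro z hz
        have : z ∈ (Set.toFinite {z : Y | G.preE z x}).toFinset := by
          rw [Set.Finite.mem_toFinset]; exact hz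
        exact hmp z this
      · rw [G.df_mem_run]
        exact Or.inr ⟨x, by simp, hadd⟩
  have hgoal : ∀ y ∈ (Set.toFinite G.goalY).toFinset,
      ∃ p : List X, G.toStrips.ValidFrom ∅ p ∧ y ∈ G.toStrips.run ∅ p := by
    intro y hy
    rw [Set.Finite.mem_toFinset] at hy
    exact key (Sum.inr y) y rfl (S.goal_sub hy)
  obtain ⟨p, hv, hm⟩ := G.combine _ hgoal
  refine ⟨p, hv, ?_⟩
  intro y hy
  exact hm y (by rw [Set.Finite.mem_toFinset]; exact hy)

lemma List.indexOf_le_of_get {α : Type} [DecidableEq α] :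
    ∀ (l : List α) (n : ℕ) (h : n < l.length), l.idxOf (l.get ⟨n, h⟩) ≤ n
  | a :: l, 0, _ => by simp
  | a :: l, n + 1, h => by
    show List.idxOf (l.get ⟨n, _⟩) (a :: l) ≤ n + 1
    rw [List.idxOf_cons]
    rcases Bool.eq_false_or_eq_true (a == l.get ⟨n, Nat.lt_of_succ_lt_succ h⟩) with hb | hb
    · rw [hb, cond_true]
      exact Nat.zero_le _
    · rw [hb, cond_false]
      exact Nat.succ_le_succ (List.indexOf_le_of_get l n _)

lemma DFGraph.goodSub_of_plan (p : List X) (hp : G.toStrips.Solves p) :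
    Nonempty G.GoodSub := by
  classical
  -- `A y n` : fluent `y` is added by the action at position `n` of the plan.
  set A : Y → ℕ → Prop := fun y n => ∃ h : n < p.length, G.addE (p.get ⟨n, h⟩) y with hA
  -- any precondition of an action occurring in the plan is achieved strictly
  -- before the first occurrence of that action
  have hfind : ∀ x ∈ p, ∀ y : Y, G.preE y x → ∃ n, n < p.idxOf x ∧ A y n := by
    intro x hxp y hpre
    have hi : p.idxOf x < p.length := List.idxOf_lt_length_iff.2 hxp
    have hget : p.get ⟨p.idxOf x, hi⟩ = x := List.idxOf_get hi
    have hyv : y ∈ G.toStrips.run ∅ (p.take (p.idxOf x)) := by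
      apply G.toStrips.valid_pre p ∅ hp.1 (p.idxOf x) hi
      show y ∈ {z | G.preE z (p.get ⟨p.idxOf x, hi⟩)}
      rw [hget]; exact hpre
    rw [G.df_mem_run] at hyv
    rcases hyv with h | ⟨a, ha, haE⟩
    · exact absurd h (Set.notMem_empty y)
    · rw [List.mem_take_iff_getElem] at ha
      obtain ⟨j, hj, hja⟩ := ha
      have hj1 : j < p.idxOf x := lt_of_lt_of_le hj (min_le_left _ _)
      have hj2 : j < p.length := lt_of_lt_of_le hj (min_le_right _ _)
      exact ⟨j, hj1, hj2, by rw [show p.get ⟨j, hj2⟩ = a from hja]; exact haE⟩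
  have hmemYs : ∀ x ∈ p, ∀ y : Y, G.preE y x → ∃ n, A y n := by
    intro x hxp y hpre
    obtain ⟨n, _, hn⟩ := hfind x hxp y hpre
    exact ⟨n, hn⟩
  refine ⟨⟨{x | x ∈ p}, {y | ∃ n, A y n},
    (fun x y => ∃ hn : ∃ n, A y n, p.get ⟨Nat.find hn, (Nat.find_spec hn).1⟩ = x),
    (fun y x => G.preE y x ∧ x ∈ p ∧ (∃ n, A y n)), ?_, ?_, ?_, ?_, ?_, ?_⟩⟩
  · rintro x y ⟨hn, rfl⟩
    exact ⟨(Nat.find_spec hn).2, List.get_mem _ _, hn⟩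
  · rintro y x ⟨hpre, hxp, hy⟩
    exact ⟨hpre, hxp, hy⟩
  · intro y hy
    have := hp.2 hy
    rw [show G.toStrips.run G.toStrips.init p = G.toStrips.run ∅ p from rfl,
      G.df_mem_run] at this
    rcases this with h | ⟨a, ha, haE⟩
    · exact absurd h (Set.notMem_empty y)
    · obtain ⟨⟨n, hn⟩, hget⟩ := List.mem_iff_get.1 ha
      exact ⟨n, hn, by rw [hget]; exact haE⟩
  · intro x hxp y hpre
    have hy : ∃ n, A y n := hmemYs x hxp y hpre
    exact ⟨hy, hpre, hxp, hy⟩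
  · rintro y ⟨n, hn⟩
    exact ⟨p.get ⟨Nat.find ⟨n, hn⟩, (Nat.find_spec ⟨n, hn⟩).1⟩, ⟨n, hn⟩, rfl⟩
  · -- acyclicity via a rank function
    set r : X ⊕ Y → ℕ := Sum.elim (fun x => 2 * p.idxOf x)
      (fun y => 2 * (if h : ∃ n, A y n then Nat.find h else 0) + 1) with hr
    have hstep : ∀ u v, G.SubStep
        (fun x y => ∃ hn : ∃ n, A y n, p.get ⟨Nat.find hn, (Nat.find_spec hn).1⟩ = x)
        (fun y x => G.preE y x ∧ x ∈ p ∧ (∃ n, A y n)) u v → r u < r v := by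
      rintro (x | y) (x' | y') h
      · exact absurd h not_false
      · -- add edge x → y'
        obtain ⟨hn, hx⟩ := h
        have h1 : r (Sum.inl x) = 2 * p.idxOf x := rfl
        have h2 : r (Sum.inr y') = 2 * Nat.find hn + 1 := by
          simp only [hr, Sum.elim_inr, dif_pos hn]
        have h3 : p.idxOf x ≤ Nat.find hn := by
          rw [← hx]; exact List.indexOf_le_of_get p _ _
        omega
      · -- pre edge y → x'
        obtain ⟨hpre, hxp, hy⟩ := h
        obtain ⟨n, hlt, hn⟩ := hfind x' hxp y hpre
        have h1 : r (Sum.inr y) = 2 * Nat.find hy + 1 := by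
          simp only [hr, Sum.elim_inr, dif_pos hy]
        have h2 : r (Sum.inl x') = 2 * p.idxOf x' := rfl
        have h3 : Nat.find hy ≤ n := Nat.find_min' hy hn
        omega
      · exact absurd h not_false
    intro v hv
    have mono : ∀ u w, Relation.TransGen (G.SubStep
        (fun x y => ∃ hn : ∃ n, A y n, p.get ⟨Nat.find hn, (Nat.find_spec hn).1⟩ = x)
        (fun y x => G.preE y x ∧ x ∈ p ∧ (∃ n, A y n))) u w → r u < r w := by
      intro u w h
      induction h with
      | single h => exact hstep _ _ h
      | tail _ h ih => exact lt_trans ih (hstep _ _ h)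
    exact absurd (mono v v hv) (lt_irrefl _)

end Helpers


/-- Delete-free planning is equivalent to the graph problem: an acyclic subgraph
satisfying conditions (1)-(3) exists iff the corresponding delete-free planning
problem has a solution. -/
theorem dfGraph_iff_plan {X Y : Type} [Fintype X] [Fintype Y] (G : DFGraph X Y) :
    Nonempty G.GoodSub ↔ ∃ p : List X, G.toStrips.Solves p := by
  constructor
  · rintro ⟨S⟩
    exact G.plan_of_goodSub S
  · rintro ⟨p, hp⟩
    exact G.goodSub_of_plan p hp
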